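/- Let 0 < ε < 1/4. Let b, h, δ be real numbers with b > 0, h > b/2, and √(b² + 4h²) < 3. In the Euclidean plane ℝ² set p₁ = (0, 0), p₂ = (b, 0), q* = (b/2, −h) and q = (b/2 + δ, −h), so that the triangle with vertices p₁, p₂, q* is the isosceles triangle with the same base and height as the triangle with vertices p₁, p₂, q, and dist(p₁, q*) + dist(p₂, q*) = √(b² + 4h²) < 3 with both slanted sides of the isosceles triangle having slope exceeding 1 in absolute value. If |δ| ≥ √(13ε/2), then dist(p₁, q) + dist(p₂, q) > √(b² + 4h²) + 2ε. -/

import Mathlib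

/-- Minkowski inequality in the plane, bare-hands form. -/
lemma minkowski_aux (u₁ v₁ u₂ v₂ : ℝ) :
    Real.sqrt ((u₁ + u₂) ^ 2 + (v₁ + v₂) ^ 2) ≤
      Real.sqrt (u₁ ^ 2 + v₁ ^ 2) + Real.sqrt (u₂ ^ 2 + v₂ ^ 2) := by
  have hA := Real.sq_sqrt (by positivity : (0:ℝ) ≤ u₁ ^ 2 + v₁ ^ 2)
  have hB := Real.sq_sqrt (by positivity : (0:ℝ) ≤ u₂ ^ 2 + v₂ ^ 2)
  have hA0 := Real.sqrt_nonneg (u₁ ^ 2 + v₁ ^ 2)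
  have hB0 := Real.sqrt_nonneg (u₂ ^ 2 + v₂ ^ 2)
  have hAB : u₁ * u₂ + v₁ * v₂ ≤
      Real.sqrt (u₁ ^ 2 + v₁ ^ 2) * Real.sqrt (u₂ ^ 2 + v₂ ^ 2) := by
    nlinarith [sq_nonneg (u₁ * v₂ - u₂ * v₁), mul_nonneg hA0 hB0,
      sq_nonneg (Real.sqrt (u₁ ^ 2 + v₁ ^ 2) * Real.sqrt (u₂ ^ 2 + v₂ ^ 2) - (u₁ * u₂ + v₁ * v₂))]
  rw [show Real.sqrt (u₁ ^ 2 + v₁ ^ 2) + Real.sqrt (u₂ ^ 2 + v₂ ^ 2)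
      = Real.sqrt ((Real.sqrt (u₁ ^ 2 + v₁ ^ 2) + Real.sqrt (u₂ ^ 2 + v₂ ^ 2)) ^ 2) from
      (Real.sqrt_sq (by positivity)).symm]
  apply Real.sqrt_le_sqrt
  nlinarith [hAB]

set_option maxHeartbeats 1000000 in
/-- **Perturbing an isosceles triangle.** Let `0 < ε < 1/4`, `b > 0`, `h > b/2`, and
`√(b² + 4h²) < 3`. In the plane set `p₁ = (0,0)`, `p₂ = (b,0)`, `q* = (b/2, −h)`,
`q = (b/2 + δ, −h)`; then `dist p₁ q* + dist p₂ q* = √(b² + 4h²)`. If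
`|δ| ≥ √(13ε/2)`, then `dist p₁ q + dist p₂ q > √(b² + 4h²) + 2ε`. -/
theorem perturbed_isosceles_triangle
    (ε b h δ : ℝ) (hε0 : 0 < ε) (hε : ε < 1 / 4)
    (hb : 0 < b) (hh : b / 2 < h)
    (hper : Real.sqrt (b ^ 2 + 4 * h ^ 2) < 3)
    (hδ : |δ| ≥ Real.sqrt (13 * ε / 2)) :
    dist ((WithLp.equiv 2 (Fin 2 → ℝ)).symm ![(0 : ℝ), 0])
        ((WithLp.equiv 2 (Fin 2 → ℝ)).symm ![b / 2 + δ, -h]) +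
      dist ((WithLp.equiv 2 (Fin 2 → ℝ)).symm ![b, (0 : ℝ)])
        ((WithLp.equiv 2 (Fin 2 → ℝ)).symm ![b / 2 + δ, -h]) >
      Real.sqrt (b ^ 2 + 4 * h ^ 2) + 2 * ε := by
  have h0 : 0 < h := lt_trans (by linarith) hh
  -- the two distances
  have hd1 : dist ((WithLp.equiv 2 (Fin 2 → ℝ)).symm ![(0 : ℝ), 0])
      ((WithLp.equiv 2 (Fin 2 → ℝ)).symm ![b / 2 + δ, -h])
      = Real.sqrt ((b / 2 + δ) ^ 2 + h ^ 2) := by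
    rw [EuclideanSpace.dist_eq]
    simp only [Fin.sum_univ_two, WithLp.equiv_symm_apply, PiLp.toLp_apply, Matrix.cons_val_zero,
      Matrix.cons_val_one, Matrix.head_cons, Real.dist_eq, sq_abs]
    congr 1
    ring
  have hd2 : dist ((WithLp.equiv 2 (Fin 2 → ℝ)).symm ![b, (0 : ℝ)])
      ((WithLp.equiv 2 (Fin 2 → ℝ)).symm ![b / 2 + δ, -h])
      = Real.sqrt ((b / 2 - δ) ^ 2 + h ^ 2) := by
    rw [EuclideanSpace.dist_eq]
    simp only [Fin.sum_univ_two, WithLp.equiv_symm_apply, PiLp.toLp_apply, Matrix.cons_val_zero,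
      Matrix.cons_val_one, Matrix.head_cons, Real.dist_eq, sq_abs]
    congr 1
    ring
  rw [hd1, hd2]
  clear hd1 hd2
  set s := Real.sqrt (b ^ 2 / 4 + h ^ 2) with hs
  have hs0 : 0 < s := Real.sqrt_pos.mpr (by positivity)
  have hs2 : s ^ 2 = b ^ 2 / 4 + h ^ 2 := Real.sq_sqrt (by positivity)
  -- perimeter = 2s
  have hP : Real.sqrt (b ^ 2 + 4 * h ^ 2) = 2 * s := by
    rw [hs, show b ^ 2 + 4 * h ^ 2 = 2 ^ 2 * (b ^ 2 / 4 + h ^ 2) by ring,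
      Real.sqrt_mul (by positivity), Real.sqrt_sq (by norm_num)]
  rw [hP] at hper ⊢
  -- δ² ≥ 13ε/2
  have hδ2 : δ ^ 2 ≥ 13 * ε / 2 := by
    have := Real.sq_sqrt (by positivity : (0:ℝ) ≤ 13 * ε / 2)
    calc 13 * ε / 2 = Real.sqrt (13 * ε / 2) ^ 2 := this.symm
      _ ≤ |δ| ^ 2 := by
          apply pow_le_pow_left₀ (Real.sqrt_nonneg _) hδ
      _ = δ ^ 2 := sq_abs δ
  -- Lagrange identity: s * d₁ = √((s²+δb/2)² + (hδ)²)
  have key : ∀ t : ℝ, s * Real.sqrt ((b / 2 + t) ^ 2 + h ^ 2)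
      = Real.sqrt ((s ^ 2 + t * b / 2) ^ 2 + (h * t) ^ 2) := by
    intro t
    rw [hs, ← Real.sqrt_mul (by positivity)]
    congr 1
    rw [Real.sq_sqrt (by positivity : (0:ℝ) ≤ b ^ 2 / 4 + h ^ 2)]
    ring
  have k1 := key δ
  have k2 := key (-δ)
  rw [show b / 2 + -δ = b / 2 - δ by ring] at k2
  -- Minkowski
  rw [show ((h * -δ) ^ 2 : ℝ) = (h * δ) ^ 2 by ring] at k2
  have hM := minkowski_aux (s ^ 2 + δ * b / 2) (h * δ) (s ^ 2 + -δ * b / 2) (h * δ)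
  rw [← k1, ← k2] at hM
  have hMs : Real.sqrt ((s ^ 2 + δ * b / 2 + (s ^ 2 + -δ * b / 2)) ^ 2 + (h * δ + h * δ) ^ 2)
      = 2 * Real.sqrt (s ^ 4 + (h * δ) ^ 2) := by
    rw [show (s ^ 2 + δ * b / 2 + (s ^ 2 + -δ * b / 2)) ^ 2 + (h * δ + h * δ) ^ 2
        = 2 ^ 2 * (s ^ 4 + (h * δ) ^ 2) by ring,
      Real.sqrt_mul (by positivity), Real.sqrt_sq (by norm_num)]
  rw [hMs] at hM
  -- strict gain
  rw [gt_iff_lt, ← mul_lt_mul_iff_right₀ hs0]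
  have hgain : s ^ 2 + ε * s < Real.sqrt (s ^ 4 + (h * δ) ^ 2) := by
    rw [show (s ^ 4 : ℝ) = (s ^ 2) ^ 2 by ring]
    have h1 : (s ^ 2 + ε * s) ^ 2 < (s ^ 2) ^ 2 + (h * δ) ^ 2 := by
      have hh2 : s ^ 2 < 2 * h ^ 2 := by nlinarith [hs2, mul_self_lt_mul_self (by linarith : (0:ℝ) ≤ b / 2) hh]
      have e1 : h ^ 2 * δ ^ 2 ≥ h ^ 2 * (13 * ε / 2) :=
        mul_le_mul_of_nonneg_left hδ2 (sq_nonneg h)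
      have e2 : h ^ 2 * (13 * ε / 2) > s ^ 2 / 2 * (13 * ε / 2) := by
        apply mul_lt_mul_of_pos_right (by linarith) (by linarith)
      have e3 : 2 * ε * s ^ 3 < 3 * ε * s ^ 2 := by
        have : s ^ 2 * (2 * s) < s ^ 2 * 3 := by
          apply mul_lt_mul_of_pos_left (by linarith) (by positivity)
        nlinarith [mul_lt_mul_of_pos_left this hε0]
      have e4 : ε ^ 2 * s ^ 2 < ε / 4 * s ^ 2 := by
        have : ε ^ 2 < ε / 4 := by nlinarith
        exact mul_lt_mul_of_pos_right this (by positivity)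
      nlinarith [e1, e2, e3, e4]
    calc s ^ 2 + ε * s = Real.sqrt ((s ^ 2 + ε * s) ^ 2) :=
          (Real.sqrt_sq (by positivity)).symm
      _ < Real.sqrt ((s ^ 2) ^ 2 + (h * δ) ^ 2) := by
          apply Real.sqrt_lt_sqrt (by positivity) h1
  calc s * (2 * s + 2 * ε) = 2 * (s ^ 2 + ε * s) := by ring
    _ < 2 * Real.sqrt (s ^ 4 + (h * δ) ^ 2) := by linarith
    _ ≤ s * Real.sqrt ((b / 2 + δ) ^ 2 + h ^ 2) + s * Real.sqrt ((b / 2 - δ) ^ 2 + h ^ 2) := hM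
    _ = s * (Real.sqrt ((b / 2 + δ) ^ 2 + h ^ 2) + Real.sqrt ((b / 2 - δ) ^ 2 + h ^ 2)) := by ring
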